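/- Let ν be an admissible profile with finite α_min and α_max, and let ν' be its dual profile with α'_max := inf{α' : ν'(α') = 1}. Then 1 - α_max ≤ α'_max ≤ 1 - α_min. -/

import Mathlib

noncomputable section
open Filter Set Topology

/-- Clamp an extended real into `{-∞} ∪ [0,1]`. -/
def clamp (b : EReal) : EReal := if b < 0 then ⊥ else min b 1

/-- The dual profile `ν'(α') = ⌊⌊ α' + inf{α : ν(α) - α > α'} ⌋⌋` (with `inf ∅ = +∞`). -/
def dualProfile (ν : ℝ → EReal) (a' : ℝ) : EReal :=
  clamp ((a' : EReal) +
    sInf ((fun a : ℝ => (a : EReal)) '' {a : ℝ | (a' : EReal) < ν a - (a : EReal)}))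

lemma clamp_eq_one_iff (b : EReal) : clamp b = 1 ↔ 1 ≤ b := by
  unfold clamp
  split_ifs with h
  · constructor
    · intro hb
      exact absurd hb.symm (EReal.coe_ne_bot 1)
    · intro hb
      exact absurd (lt_of_le_of_lt hb h) (by norm_num)
  · simp [min_eq_right_iff]

theorem stmt10 (ν : ℝ → EReal)
    (hmono : Monotone ν)
    (hrc : ∀ a : ℝ, ContinuousWithinAt ν (Set.Ici a) a)
    (hval : ∀ a : ℝ, ν a = ⊥ ∨ (0 ≤ ν a ∧ ν a ≤ 1))
    (hne : ∃ a : ℝ, ν a ≠ ⊥)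
    (hminfin : ∃ m : ℝ, sInf ((fun a : ℝ => (a : EReal)) '' {a : ℝ | 0 ≤ ν a}) = (m : EReal))
    (hmaxfin : ∃ m : ℝ, sInf ((fun a : ℝ => (a : EReal)) '' {a : ℝ | ν a = 1}) = (m : EReal)) :
    (1 : EReal) - sInf ((fun a : ℝ => (a : EReal)) '' {a : ℝ | ν a = 1}) ≤
        sInf ((fun a : ℝ => (a : EReal)) '' {a' : ℝ | dualProfile ν a' = 1}) ∧
      sInf ((fun a : ℝ => (a : EReal)) '' {a' : ℝ | dualProfile ν a' = 1}) ≤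
        (1 : EReal) - sInf ((fun a : ℝ => (a : EReal)) '' {a : ℝ | 0 ≤ ν a}) := by
  obtain ⟨M, hM⟩ := hmaxfin
  obtain ⟨m, hm⟩ := hminfin
  rw [hM, hm]
  -- ν is 1 on (M, ∞)
  have hone : ∀ a : ℝ, M < a → ν a = 1 := by
    intro a ha
    have hlt : sInf ((fun a : ℝ => (a : EReal)) '' {a : ℝ | ν a = 1}) < (a : EReal) := by
      rw [hM]; exact_mod_cast ha
    obtain ⟨x, hx, hxa⟩ := sInf_lt_iff.mp hlt
    obtain ⟨b, hb, rfl⟩ := hx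
    have hba : b ≤ a := le_of_lt (EReal.coe_lt_coe_iff.mp hxa)
    have h1 : (1 : EReal) ≤ ν a := hb ▸ hmono hba
    rcases hval a with h' | h'
    · rw [h'] at h1
      exact absurd (le_bot_iff.mp h1) (EReal.coe_ne_bot 1)
    · exact le_antisymm h'.2 h1
  -- ν M = 1 by right continuity
  have hνM : ν M = 1 := by
    have h1 : Tendsto ν (𝓝[>] M) (𝓝 (ν M)) :=
      (hrc M).tendsto.mono_left (nhdsWithin_mono _ Ioi_subset_Ici_self)
    have h2 : Tendsto ν (𝓝[>] M) (𝓝 (1 : EReal)) := by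
      have heq : (fun _ : ℝ => (1 : EReal)) =ᶠ[𝓝[>] M] ν := by
        filter_upwards [self_mem_nhdsWithin] with a ha using (hone a ha).symm
      exact Tendsto.congr' heq tendsto_const_nhds
    exact tendsto_nhds_unique h1 h2
  constructor
  · -- lower bound
    apply le_sInf
    rintro x ⟨a', ha', rfl⟩
    have h1 : (1 : EReal) ≤ (a' : EReal) +
        sInf ((fun a : ℝ => (a : EReal)) '' {a : ℝ | (a' : EReal) < ν a - (a : EReal)}) :=
      (clamp_eq_one_iff _).mp ha'
    have key : 1 - M ≤ a' := by
      by_contra hcon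
      push_neg at hcon
      -- then M < 1 - a', so M is in the defining set
      have hMem : (a' : EReal) < ν M - (M : EReal) := by
        rw [hνM]
        have h1M : (1 : EReal) - (M : EReal) = ((1 - M : ℝ) : EReal) := by
          rw [EReal.coe_sub, EReal.coe_one]
        rw [h1M]
        exact_mod_cast (by linarith : a' < 1 - M)
      have hIle : sInf ((fun a : ℝ => (a : EReal)) '' {a : ℝ | (a' : EReal) < ν a - (a : EReal)})
          ≤ (M : EReal) := sInf_le ⟨M, hMem, rfl⟩
      have : (1 : EReal) ≤ (a' : EReal) + (M : EReal) :=
        h1.trans (add_le_add_right hIle _)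
      rw [← EReal.coe_add, ← EReal.coe_one, EReal.coe_le_coe_iff] at this
      linarith
    calc (1 : EReal) - (M : EReal) = ((1 - M : ℝ) : EReal) := by
          rw [EReal.coe_sub, EReal.coe_one]
      _ ≤ (a' : EReal) := by exact_mod_cast key
  · -- upper bound
    have key : ∀ a' : ℝ, 1 - m < a' → dualProfile ν a' = 1 := by
      intro a' ha'
      rw [dualProfile, clamp_eq_one_iff]
      have hI : (m : EReal) ≤
          sInf ((fun a : ℝ => (a : EReal)) '' {a : ℝ | (a' : EReal) < ν a - (a : EReal)}) := by
        apply le_sInf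
        rintro x ⟨a, ha, rfl⟩
        have hnb : 0 ≤ ν a := by
          simp only [mem_setOf_eq] at ha
          rcases hval a with h' | h'
          · exfalso
            rw [h', EReal.bot_sub] at ha
            exact absurd ha (by simp)
          · exact h'.1
        rw [← hm]
        exact sInf_le ⟨a, hnb, rfl⟩
      calc (1 : EReal) ≤ ((a' + m : ℝ) : EReal) := by
            rw [← EReal.coe_one]; exact_mod_cast (by linarith : (1:ℝ) ≤ a' + m)
        _ = (a' : EReal) + (m : EReal) := EReal.coe_add _ _
        _ ≤ _ := add_le_add_right hI _
    have hgoal : (1 : EReal) - (m : EReal) = ((1 - m : ℝ) : EReal) := by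
      rw [EReal.coe_sub, EReal.coe_one]
    rw [hgoal]
    apply le_of_forall_gt_imp_ge_of_dense
    intro c hc
    obtain ⟨r, hr1, hr2⟩ := EReal.lt_iff_exists_real_btwn.mp hc
    have hr : 1 - m < r := by exact_mod_cast hr1
    have hmem : ((r : ℝ) : EReal) ∈
        (fun a : ℝ => (a : EReal)) '' {a' : ℝ | dualProfile ν a' = 1} := ⟨r, key r hr, rfl⟩
    exact (sInf_le hmem).trans hr2.le
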